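/- Let I > 0 and define on the set Y = { (y, alpha) in R_{>0}^3 x R^5 : y0 + y1 + y2 = 1, |alpha0| <= I*y0, |alpha1| <= I*y1, |alpha2| <= I*y1, |alpha3| <= I*y2, |alpha4| <= I*y2 } the function omega(y, alpha) = 2(1+sqrt(2)*I)^2 * ( y0 ln y0 + y1 ln y1 + y2 ln y2 + ln 3 ) + alpha0^2/y0 + alpha1^2/y1 + alpha2^2/y1 + alpha3^2/y2 + alpha4^2/y2. Then omega is 1-strongly convex on Y with respect to the norm ||(y, alpha)|| = sqrt( (|y0|+|y1|+|y2|)^2 + ||alpha||_2^2 ). -/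

import Mathlib

set_option maxHeartbeats 2000000


lemma core1 (r : ℝ) (hr1 : 1 ≤ r) :
    (r-1)^2/(2*r) ≤ r * Real.log r - (r - 1) := by
  have hmono : MonotoneOn (fun x : ℝ => x * Real.log x - (x-1) - (x-1)^2/(2*x)) (Set.Icc 1 r) := by
    apply monotoneOn_of_hasDerivWithinAt_nonneg (convex_Icc 1 r)
      (f' := fun x => Real.log x - 1/2 + 1/(2*x^2))
    · apply ContinuousOn.sub
      apply ContinuousOn.sub
      · exact continuousOn_id.mul (Real.continuousOn_log.mono (by
          intro x hx; simp; intro h; rw [h] at hx; exact absurd hx.1 (by linarith)))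
      · fun_prop
      · apply ContinuousOn.div (by fun_prop) (by fun_prop)
        intro x hx; have := hx.1; positivity
    · intro x hx
      rw [interior_Icc] at hx
      have hx0 : 0 < x := lt_trans zero_lt_one hx.1
      have h1 : HasDerivAt (fun x : ℝ => x * Real.log x - (x-1) - (x-1)^2/(2*x))
          (1 * Real.log x + x * x⁻¹ - 1 - ((2*(x-1)^1*1)*(2*x) - (x-1)^2*2)/(2*x)^2) x := by
        exact (((hasDerivAt_id x).mul (Real.hasDerivAt_log hx0.ne')).sub
          (((hasDerivAt_id x).sub_const 1))).sub
          (((((hasDerivAt_id x).sub_const 1).pow 2).div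
            (by simpa using (hasDerivAt_id x).const_mul (2:ℝ)) (by positivity)))
      have : (1 * Real.log x + x * x⁻¹ - 1 - ((2*(x-1)^1*1)*(2*x) - (x-1)^2*2)/(2*x)^2)
          = Real.log x - 1/2 + 1/(2*x^2) := by
        field_simp
        ring
      rw [this] at h1
      exact h1.hasDerivWithinAt
    · intro x hx
      rw [interior_Icc] at hx
      have hx1 : 1 < x := hx.1
      have hx0 : 0 < x := by linarith
      have hlog : 1 - 1/x ≤ Real.log x := by
        have h := Real.log_le_sub_one_of_pos (show 0 < 1/x by positivity)
        rw [Real.log_div one_ne_zero hx0.ne', Real.log_one] at h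
        linarith
      have hq : 0 ≤ (1 - 1/x) - 1/2 + 1/(2*x^2) := by
        have : (1 - 1/x) - 1/2 + 1/(2*x^2) = (x-1)^2/(2*x^2) := by field_simp; ring
        rw [this]; positivity
      linarith
  have h := hmono (Set.left_mem_Icc.2 hr1) (Set.right_mem_Icc.2 hr1) hr1
  simp at h
  linarith


-- core for r ≤ 1
lemma core2 (r : ℝ) (hr : 0 < r) (hr1 : r ≤ 1) :
    (r-1)^2/2 ≤ r * Real.log r - (r - 1) := by
  have hmono : AntitoneOn (fun x : ℝ => x * Real.log x - (x-1) - (x-1)^2/2) (Set.Icc r 1) := by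
    apply antitoneOn_of_hasDerivWithinAt_nonpos (convex_Icc r 1)
      (f' := fun x => Real.log x - (x - 1))
    · apply ContinuousOn.sub
      apply ContinuousOn.sub
      · exact continuousOn_id.mul (Real.continuousOn_log.mono (by
          intro x hx; simp; intro h; rw [h] at hx; exact absurd hx.1 (by linarith)))
      · fun_prop
      · fun_prop
    · intro x hx
      rw [interior_Icc] at hx
      have hx0 : 0 < x := lt_trans hr hx.1
      have h1 : HasDerivAt (fun x : ℝ => x * Real.log x - (x-1) - (x-1)^2/2)
          (1 * Real.log x + x * x⁻¹ - 1 - (2*(x-1)^1*1)/2) x := by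
        exact (((hasDerivAt_id x).mul (Real.hasDerivAt_log hx0.ne')).sub
          (((hasDerivAt_id x).sub_const 1))).sub
          ((((hasDerivAt_id x).sub_const 1).pow 2).div_const 2)
      have : (1 * Real.log x + x * x⁻¹ - 1 - (2*(x-1)^1*1)/2) = Real.log x - (x-1) := by
        field_simp
        ring
      rw [this] at h1
      exact h1.hasDerivWithinAt
    · intro x hx
      rw [interior_Icc] at hx
      have hx0 : 0 < x := lt_trans hr hx.1
      have := Real.log_le_sub_one_of_pos hx0
      linarith
  have h := hmono (Set.left_mem_Icc.2 hr1) (Set.right_mem_Icc.2 hr1) hr1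
  simp at h
  linarith

lemma key_log (x s : ℝ) (hx : 0 < x) (hs : 0 < s) :
    (x-s)^2/(2*max x s) ≤ x*(Real.log x - Real.log s) - (x - s) := by
  have hlog : Real.log (x/s) = Real.log x - Real.log s := Real.log_div hx.ne' hs.ne'
  rcases le_total s x with h | h
  · rw [max_eq_left h]
    have hc := core1 (x/s) (by rw [le_div_iff₀ hs]; linarith)
    have h2 := mul_le_mul_of_nonneg_left hc hs.le
    have e1 : s * ((x/s-1)^2/(2*(x/s))) = (x-s)^2/(2*x) := by
      field_simp
    have e2 : s * (x/s * Real.log (x/s) - (x/s - 1)) = x*(Real.log x - Real.log s) - (x - s) := by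
      rw [hlog]; field_simp
    rw [e1, e2] at h2; exact h2
  · rw [max_eq_right h]
    have hc := core2 (x/s) (by positivity) (by rw [div_le_one hs]; linarith)
    have h2 := mul_le_mul_of_nonneg_left hc hs.le
    have e1 : s * ((x/s-1)^2/2) = (x-s)^2/(2*s) := by
      field_simp
    have e2 : s * (x/s * Real.log (x/s) - (x/s - 1)) = x*(Real.log x - Real.log s) - (x - s) := by
      rw [hlog]; field_simp
    rw [e1, e2] at h2; exact h2

lemma ent_gap (t p q : ℝ) (ht0 : 0 ≤ t) (ht1 : t ≤ 1) (hp : 0 < p) (hq : 0 < q) :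
    t*(1-t)/2 * ((p-q)^2 / max p q) ≤
      t*(p*Real.log p) + (1-t)*(q*Real.log q)
        - (t*p+(1-t)*q)*Real.log (t*p+(1-t)*q) := by
  have hM : 0 < max p q := lt_max_of_lt_left hp
  have ht1' : (0:ℝ) ≤ 1 - t := by linarith
  have hs : 0 < t*p+(1-t)*q := by nlinarith [mul_nonneg ht0 hp.le, mul_nonneg ht1' hq.le]
  have h1 := mul_le_mul_of_nonneg_left (key_log p (t*p+(1-t)*q) hp hs) ht0
  have h2 := mul_le_mul_of_nonneg_left (key_log q (t*p+(1-t)*q) hq hs) ht1'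
  have hsle : t*p+(1-t)*q ≤ max p q := by
    nlinarith [mul_le_mul_of_nonneg_left (le_max_left p q) ht0,
      mul_le_mul_of_nonneg_left (le_max_right p q) ht1']
  have hps : max p (t*p+(1-t)*q) ≤ max p q := max_le (le_max_left _ _) hsle
  have hqs : max q (t*p+(1-t)*q) ≤ max p q := max_le (le_max_right _ _) hsle
  have hd1 : t * ((p-(t*p+(1-t)*q))^2/(2*(max p q)))
      ≤ t * ((p-(t*p+(1-t)*q))^2/(2*(max p (t*p+(1-t)*q)))) := by
    gcongr
  have hd2 : (1-t) * ((q-(t*p+(1-t)*q))^2/(2*(max p q)))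
      ≤ (1-t) * ((q-(t*p+(1-t)*q))^2/(2*(max q (t*p+(1-t)*q)))) := by
    gcongr
  have g1 := hd1.trans h1
  have g2 := hd2.trans h2
  have e1 : t*(1-t)/2 * ((p-q)^2 / max p q)
      = t * ((p-(t*p+(1-t)*q))^2/(2*(max p q)))
        + (1-t) * ((q-(t*p+(1-t)*q))^2/(2*(max p q))) := by ring
  have e2 : t*(p*(Real.log p - Real.log (t*p+(1-t)*q)) - (p-(t*p+(1-t)*q)))
        + (1-t)*(q*(Real.log q - Real.log (t*p+(1-t)*q)) - (q-(t*p+(1-t)*q)))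
      = t*(p*Real.log p) + (1-t)*(q*Real.log q)
        - (t*p+(1-t)*q)*Real.log (t*p+(1-t)*q) := by ring
  linarith


lemma sq_add_le2 (x y : ℝ) : (x+y)^2 ≤ 2*x^2 + 2*y^2 := by nlinarith [sq_nonneg (x-y)]

lemma q_gap (t p q a b I : ℝ) (ht0 : 0 ≤ t) (ht1 : t ≤ 1) (hp : 0 < p) (hp1 : p ≤ 1)
    (hq : 0 < q) (hq1 : q ≤ 1) (ha : |a| ≤ I*p) (hb : |b| ≤ I*q) :
    t*(1-t)/2 * ((a-b)^2 - 2*I^2*(p-q)^2) ≤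
      t*(a^2/p) + (1-t)*(b^2/q) - (t*a+(1-t)*b)^2/(t*p+(1-t)*q) := by
  have ht1' : (0:ℝ) ≤ 1 - t := by linarith
  have hs : 0 < t*p+(1-t)*q := by nlinarith [mul_nonneg ht0 hp.le, mul_nonneg ht1' hq.le]
  have hiden : t*(a^2/p) + (1-t)*(b^2/q) - (t*a+(1-t)*b)^2/(t*p+(1-t)*q)
      = t*(1-t) * ((a*q-b*p)^2/(p*q*(t*p+(1-t)*q))) := by
    field_simp
    ring
  rw [hiden]
  have ha2 : a^2 ≤ I^2*p^2 := by nlinarith [sq_abs a, abs_nonneg a]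
  have hb2 : b^2 ≤ I^2*q^2 := by nlinarith [sq_abs b, abs_nonneg b]
  have core : (a-b)^2 - 2*I^2*(p-q)^2 ≤ 2 * ((a*q-b*p)^2/(p*q*(t*p+(1-t)*q))) := by
    rcases le_total q p with h | h
    · have hsle : t*p+(1-t)*q ≤ p := by nlinarith [mul_nonneg ht1' (sub_nonneg.2 h)]
      have h3 : q*(t*p+(1-t)*q) ≤ p := by nlinarith [mul_nonneg (by linarith : (0:ℝ) ≤ 1-q) hs.le]
      have hden : p*q*(t*p+(1-t)*q) ≤ p^2 := by nlinarith [mul_le_mul_of_nonneg_left h3 hp.le]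
      have h2 : (a*q-b*p)^2/p^2 ≤ (a*q-b*p)^2/(p*q*(t*p+(1-t)*q)) := by
        gcongr
      have heq : a - b = (a*q-b*p)/p + a*(p-q)/p := by field_simp; ring
      have hy : (a*(p-q)/p)^2 ≤ I^2*(p-q)^2 := by
        have e : (a*(p-q)/p)^2 = a^2*(p-q)^2/p^2 := by ring
        rw [e, div_le_iff₀ (by positivity)]
        linarith [mul_le_mul_of_nonneg_right ha2 (sq_nonneg (p-q))]
      have hsq : (a-b)^2 ≤ 2*((a*q-b*p)/p)^2 + 2*(a*(p-q)/p)^2 := by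
        rw [heq]; exact sq_add_le2 _ _
      have hw : ((a*q-b*p)/p)^2 = (a*q-b*p)^2/p^2 := by rw [div_pow]
      linarith
    · have hsle : t*p+(1-t)*q ≤ q := by nlinarith [mul_nonneg ht0 (sub_nonneg.2 h)]
      have h3 : p*(t*p+(1-t)*q) ≤ q := by nlinarith [mul_nonneg (by linarith : (0:ℝ) ≤ 1-p) hs.le]
      have hden : p*q*(t*p+(1-t)*q) ≤ q^2 := by
        have := mul_le_mul_of_nonneg_left h3 hq.le
        nlinarith []
      have h2 : (a*q-b*p)^2/q^2 ≤ (a*q-b*p)^2/(p*q*(t*p+(1-t)*q)) := by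
        gcongr
      have heq : a - b = (a*q-b*p)/q + b*(p-q)/q := by field_simp; ring
      have hy : (b*(p-q)/q)^2 ≤ I^2*(p-q)^2 := by
        have e : (b*(p-q)/q)^2 = b^2*(p-q)^2/q^2 := by ring
        rw [e, div_le_iff₀ (by positivity)]
        linarith [mul_le_mul_of_nonneg_right hb2 (sq_nonneg (p-q))]
      have hsq : (a-b)^2 ≤ 2*((a*q-b*p)/q)^2 + 2*(b*(p-q)/q)^2 := by
        rw [heq]; exact sq_add_le2 _ _
      have hw : ((a*q-b*p)/q)^2 = (a*q-b*p)^2/q^2 := by rw [div_pow]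
      linarith
  calc t*(1-t)/2 * ((a-b)^2 - 2*I^2*(p-q)^2)
      ≤ t*(1-t)/2 * (2 * ((a*q-b*p)^2/(p*q*(t*p+(1-t)*q)))) := by
        apply mul_le_mul_of_nonneg_left core (by positivity)
    _ = t*(1-t) * ((a*q-b*p)^2/(p*q*(t*p+(1-t)*q))) := by ring

lemma l1_bound (m0 m1 m2 d0 d1 d2 : ℝ) (h0 : 0 < m0) (h1 : 0 < m1) (h2 : 0 < m2)
    (hm : m0+m1+m2 ≤ 2) :
    (|d0|+|d1|+|d2|)^2 ≤ 2*(d0^2/m0 + d1^2/m1 + d2^2/m2) := by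
  set c : ℝ := (|d0|+|d1|+|d2|)/(m0+m1+m2) with hc
  have hT : 0 < m0+m1+m2 := by linarith
  have key : ∀ m d : ℝ, 0 < m → 2*c*|d| - c^2*m ≤ d^2/m := by
    intro m d hm0
    have e : d^2/m - (2*c*|d| - c^2*m) = (|d| - c*m)^2/m := by
      rw [div_sub' hm0.ne', div_eq_div_iff hm0.ne' hm0.ne']
      nlinarith [sq_abs d]
    have e2 : (0:ℝ) ≤ (|d| - c*m)^2/m := by positivity
    linarith
  have k0 := key m0 d0 h0
  have k1 := key m1 d1 h1
  have k2 := key m2 d2 h2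
  have hval : 2*c*(|d0|+|d1|+|d2|) - c^2*(m0+m1+m2) = (|d0|+|d1|+|d2|)^2/(m0+m1+m2) := by
    rw [hc]; field_simp; ring
  have hfin : (|d0|+|d1|+|d2|)^2/2 ≤ (|d0|+|d1|+|d2|)^2/(m0+m1+m2) := by
    gcongr
  linarith

/-- The distance generating function ω is 1-strongly convex on Y with respect to the
norm ‖(y, α)‖ = sqrt((|y0|+|y1|+|y2|)^2 + ‖α‖₂^2), in the interpolation sense. -/
theorem stmt_10 (I : ℝ) (hI : 0 < I)
    (Y : Set ((Fin 3 → ℝ) × (Fin 5 → ℝ)))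
    (hY : Y = {z | (∀ i, 0 < z.1 i) ∧ z.1 0 + z.1 1 + z.1 2 = 1 ∧
      |z.2 0| ≤ I * z.1 0 ∧ |z.2 1| ≤ I * z.1 1 ∧ |z.2 2| ≤ I * z.1 1 ∧
      |z.2 3| ≤ I * z.1 2 ∧ |z.2 4| ≤ I * z.1 2})
    (ω : ((Fin 3 → ℝ) × (Fin 5 → ℝ)) → ℝ)
    (hω : ω = fun z =>
      2 * (1 + Real.sqrt 2 * I) ^ 2 *
        (z.1 0 * Real.log (z.1 0) + z.1 1 * Real.log (z.1 1) + z.1 2 * Real.log (z.1 2)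
          + Real.log 3)
        + (z.2 0) ^ 2 / z.1 0 + (z.2 1) ^ 2 / z.1 1 + (z.2 2) ^ 2 / z.1 1
        + (z.2 3) ^ 2 / z.1 2 + (z.2 4) ^ 2 / z.1 2)
    (nrm : ((Fin 3 → ℝ) × (Fin 5 → ℝ)) → ℝ)
    (hnrm : nrm = fun z => Real.sqrt ((|z.1 0| + |z.1 1| + |z.1 2|) ^ 2 +
      ((z.2 0) ^ 2 + (z.2 1) ^ 2 + (z.2 2) ^ 2 + (z.2 3) ^ 2 + (z.2 4) ^ 2))) :
    ∀ z ∈ Y, ∀ z' ∈ Y, ∀ t : ℝ, 0 ≤ t → t ≤ 1 →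
      ω (t • z + (1 - t) • z') ≤
        t * ω z + (1 - t) * ω z' - (1 / 2) * t * (1 - t) * (nrm (z - z')) ^ 2 := by
  subst hY hω hnrm
  intro z hz z' hz' t ht0 ht1
  simp only [Set.mem_setOf_eq] at hz hz'
  obtain ⟨hP, hPs, hA0, hA1, hA2, hA3, hA4⟩ := hz
  obtain ⟨hQ, hQs, hB0, hB1, hB2, hB3, hB4⟩ := hz'
  have hP0 := hP 0; have hP1 := hP 1; have hP2 := hP 2
  have hQ0 := hQ 0; have hQ1 := hQ 1; have hQ2 := hQ 2
  have hP0' : z.1 0 ≤ 1 := by linarith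
  have hP1' : z.1 1 ≤ 1 := by linarith
  have hP2' : z.1 2 ≤ 1 := by linarith
  have hQ0' : z'.1 0 ≤ 1 := by linarith
  have hQ1' : z'.1 1 ≤ 1 := by linarith
  have hQ2' : z'.1 2 ≤ 1 := by linarith
  simp only [Prod.fst_add, Prod.snd_add, Prod.smul_fst, Prod.smul_snd, Pi.add_apply,
    Pi.smul_apply, Prod.fst_sub, Prod.snd_sub, Pi.sub_apply, smul_eq_mul]
  rw [Real.sq_sqrt (by positivity)]
  set C := 2 * (1 + Real.sqrt 2 * I) ^ 2 with hCdef
  -- entropy gaps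
  have hE0 := ent_gap t (z.1 0) (z'.1 0) ht0 ht1 hP0 hQ0
  have hE1 := ent_gap t (z.1 1) (z'.1 1) ht0 ht1 hP1 hQ1
  have hE2 := ent_gap t (z.1 2) (z'.1 2) ht0 ht1 hP2 hQ2
  -- quadratic gaps
  have hG0 := q_gap t (z.1 0) (z'.1 0) (z.2 0) (z'.2 0) I ht0 ht1 hP0 hP0' hQ0 hQ0' hA0 hB0
  have hG1 := q_gap t (z.1 1) (z'.1 1) (z.2 1) (z'.2 1) I ht0 ht1 hP1 hP1' hQ1 hQ1' hA1 hB1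
  have hG2 := q_gap t (z.1 1) (z'.1 1) (z.2 2) (z'.2 2) I ht0 ht1 hP1 hP1' hQ1 hQ1' hA2 hB2
  have hG3 := q_gap t (z.1 2) (z'.1 2) (z.2 3) (z'.2 3) I ht0 ht1 hP2 hP2' hQ2 hQ2' hA3 hB3
  have hG4 := q_gap t (z.1 2) (z'.1 2) (z.2 4) (z'.2 4) I ht0 ht1 hP2 hP2' hQ2 hQ2' hA4 hB4
  -- max facts
  have hM0 : 0 < max (z.1 0) (z'.1 0) := lt_max_of_lt_left hP0
  have hM1 : 0 < max (z.1 1) (z'.1 1) := lt_max_of_lt_left hP1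
  have hM2 : 0 < max (z.1 2) (z'.1 2) := lt_max_of_lt_left hP2
  have hM0' : max (z.1 0) (z'.1 0) ≤ 1 := max_le hP0' hQ0'
  have hM1' : max (z.1 1) (z'.1 1) ≤ 1 := max_le hP1' hQ1'
  have hM2' : max (z.1 2) (z'.1 2) ≤ 1 := max_le hP2' hQ2'
  have hMsum : max (z.1 0) (z'.1 0) + max (z.1 1) (z'.1 1) + max (z.1 2) (z'.1 2) ≤ 2 := by
    have h0 := max_le (show z.1 0 ≤ z.1 0 + z'.1 0 by linarith) (show z'.1 0 ≤ z.1 0 + z'.1 0 by linarith)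
    have h1 := max_le (show z.1 1 ≤ z.1 1 + z'.1 1 by linarith) (show z'.1 1 ≤ z.1 1 + z'.1 1 by linarith)
    have h2 := max_le (show z.1 2 ≤ z.1 2 + z'.1 2 by linarith) (show z'.1 2 ≤ z.1 2 + z'.1 2 by linarith)
    linarith
  have hL := l1_bound (max (z.1 0) (z'.1 0)) (max (z.1 1) (z'.1 1)) (max (z.1 2) (z'.1 2))
    (z.1 0 - z'.1 0) (z.1 1 - z'.1 1) (z.1 2 - z'.1 2) hM0 hM1 hM2 hMsum
  -- E_i ≥ d_i^2
  have hD0 : (z.1 0 - z'.1 0)^2 ≤ (z.1 0 - z'.1 0)^2 / max (z.1 0) (z'.1 0) := by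
    rw [le_div_iff₀ hM0]
    have := mul_le_mul_of_nonneg_left hM0' (sq_nonneg (z.1 0 - z'.1 0))
    linarith
  have hD1 : (z.1 1 - z'.1 1)^2 ≤ (z.1 1 - z'.1 1)^2 / max (z.1 1) (z'.1 1) := by
    rw [le_div_iff₀ hM1]
    have := mul_le_mul_of_nonneg_left hM1' (sq_nonneg (z.1 1 - z'.1 1))
    linarith
  have hD2 : (z.1 2 - z'.1 2)^2 ≤ (z.1 2 - z'.1 2)^2 / max (z.1 2) (z'.1 2) := by
    rw [le_div_iff₀ hM2]
    have := mul_le_mul_of_nonneg_left hM2' (sq_nonneg (z.1 2 - z'.1 2))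
    linarith
  have hEnn : 0 ≤ (z.1 0 - z'.1 0)^2 / max (z.1 0) (z'.1 0)
      + (z.1 1 - z'.1 1)^2 / max (z.1 1) (z'.1 1)
      + (z.1 2 - z'.1 2)^2 / max (z.1 2) (z'.1 2) := by
    have := sq_nonneg (z.1 0 - z'.1 0); have := sq_nonneg (z.1 1 - z'.1 1)
    have := sq_nonneg (z.1 2 - z'.1 2); linarith
  have hs2 : Real.sqrt 2 ^ 2 = 2 := Real.sq_sqrt (by norm_num)
  have hs2n : 0 ≤ Real.sqrt 2 := Real.sqrt_nonneg 2
  -- the key bound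
  have key : (|z.1 0 - z'.1 0| + |z.1 1 - z'.1 1| + |z.1 2 - z'.1 2|)^2
      + 2*I^2*(z.1 0 - z'.1 0)^2 + 4*I^2*(z.1 1 - z'.1 1)^2 + 4*I^2*(z.1 2 - z'.1 2)^2
      ≤ C *
        ((z.1 0 - z'.1 0)^2 / max (z.1 0) (z'.1 0)
          + (z.1 1 - z'.1 1)^2 / max (z.1 1) (z'.1 1)
          + (z.1 2 - z'.1 2)^2 / max (z.1 2) (z'.1 2)) := by
    have hCval : C = 2 + 4*Real.sqrt 2*I + 4*I^2 := by
      rw [hCdef]; linear_combination (2*I^2) * hs2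
    rw [hCval]
    have m0 := mul_le_mul_of_nonneg_left hD0 (show (0:ℝ) ≤ 4*I^2 by positivity)
    have m1 := mul_le_mul_of_nonneg_left hD1 (show (0:ℝ) ≤ 4*I^2 by positivity)
    have m2 := mul_le_mul_of_nonneg_left hD2 (show (0:ℝ) ≤ 4*I^2 by positivity)
    have m3 := mul_nonneg (show (0:ℝ) ≤ 4*Real.sqrt 2*I by positivity) hEnn
    have m4 : (0:ℝ) ≤ I^2 * (z.1 0 - z'.1 0)^2 := by positivity
    linarith [hL]
  have htt : 0 ≤ t*(1-t)/2 :=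
    div_nonneg (mul_nonneg ht0 (by linarith)) (by norm_num)
  have hGsum : t*(1-t)/2 * ((z.1 0 - z'.1 0)^2 / max (z.1 0) (z'.1 0)
        + (z.1 1 - z'.1 1)^2 / max (z.1 1) (z'.1 1)
        + (z.1 2 - z'.1 2)^2 / max (z.1 2) (z'.1 2))
      ≤ (t*(z.1 0*Real.log (z.1 0)) + (1-t)*(z'.1 0*Real.log (z'.1 0))
          - (t*z.1 0+(1-t)*z'.1 0)*Real.log (t*z.1 0+(1-t)*z'.1 0))
        + (t*(z.1 1*Real.log (z.1 1)) + (1-t)*(z'.1 1*Real.log (z'.1 1))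
          - (t*z.1 1+(1-t)*z'.1 1)*Real.log (t*z.1 1+(1-t)*z'.1 1))
        + (t*(z.1 2*Real.log (z.1 2)) + (1-t)*(z'.1 2*Real.log (z'.1 2))
          - (t*z.1 2+(1-t)*z'.1 2)*Real.log (t*z.1 2+(1-t)*z'.1 2)) := by
    linarith
  have hCnn : (0:ℝ) ≤ C := by rw [hCdef]; positivity
  have hCG := mul_le_mul_of_nonneg_left hGsum hCnn
  have hkey2 := mul_le_mul_of_nonneg_left key htt
  linarith [hCG, hG0, hG1, hG2, hG3, hG4, hkey2]
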